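/- For the tribonacci position sequences A, B, C (positions of 1, 0, 2 in the infinite tribonacci word), one has C(n) = A(n) + B(n) + n + 2 for all n ≥ 0. -/

import Mathlib

/-- The tribonacci substitution on letters: 0 ↦ 01, 1 ↦ 02, 2 ↦ 0. -/
def sigmaW : ℕ → List ℕ
  | 0 => [0, 1]
  | 1 => [0, 2]
  | _ => [0]

/-- The substitution extended to words (concatenation homomorphism). -/
def sigmaL (w : List ℕ) : List ℕ := w.flatMap sigmaW

/-- The infinite tribonacci word t = 0,1,0,2,0,1,0,0,1,0,2,...,
the fixed point of the substitution starting from 0. -/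
def t (n : ℕ) : ℕ := (sigmaL^[n + 1] [0]).getD n 0

/-- A(n): position of the (n+1)-st occurrence of the letter 1 in t. -/
noncomputable def A (n : ℕ) : ℕ := Nat.nth (fun k => t k = 1) n

/-- B(n): position of the (n+1)-st occurrence of the letter 0 in t. -/
noncomputable def B (n : ℕ) : ℕ := Nat.nth (fun k => t k = 0) n

/-- C(n): position of the (n+1)-st occurrence of the letter 2 in t. -/
noncomputable def C (n : ℕ) : ℕ := Nat.nth (fun k => t k = 2) n

namespace Trib

def pref (n : ℕ) : List ℕ := sigmaL^[n] [0]

lemma pref_succ (n : ℕ) : pref (n + 1) = sigmaL (pref n) :=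
  Function.iterate_succ_apply' _ _ _

lemma sigmaL_append (a b : List ℕ) : sigmaL (a ++ b) = sigmaL a ++ sigmaL b :=
  List.flatMap_append

lemma sigmaL_cons (a : ℕ) (w : List ℕ) : sigmaL (a :: w) = sigmaW a ++ sigmaL w :=
  List.flatMap_cons

lemma sigmaL_prefix {a b : List ℕ} (h : a <+: b) : sigmaL a <+: sigmaL b := by
  obtain ⟨c, rfl⟩ := h
  exact ⟨sigmaL c, (sigmaL_append a c).symm⟩

lemma pref_prefix_succ (n : ℕ) : pref n <+: pref (n + 1) := by
  induction n with
  | zero => exact ⟨[1], rfl⟩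
  | succ n ih => rw [pref_succ, pref_succ]; exact sigmaL_prefix ih

lemma pref_prefix {m n : ℕ} (h : m ≤ n) : pref m <+: pref n := by
  induction n with
  | zero => simp_all
  | succ n ih =>
    rcases Nat.lt_or_ge m (n+1) with h' | h'
    · exact (ih (Nat.lt_succ_iff.mp h')).trans (pref_prefix_succ n)
    · have : m = n + 1 := le_antisymm h h'
      subst this; exact List.prefix_refl _

lemma zero_mem_pref (n : ℕ) : 0 ∈ pref n := by
  induction n with
  | zero => simp [pref]
  | succ n ih =>
    rw [pref_succ]
    have : (0 : ℕ) ∈ sigmaW 0 := by simp [sigmaW]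
    exact List.mem_flatMap.2 ⟨0, ih, this⟩

lemma count0_sigmaL (w : List ℕ) : (sigmaL w).count 0 = w.length := by
  induction w with
  | nil => rfl
  | cons a w ih =>
    rw [sigmaL_cons, List.count_append, ih]
    rcases a with _ | _ | a <;> simp [sigmaW] <;> omega

lemma count1_sigmaL (w : List ℕ) : (sigmaL w).count 1 = w.count 0 := by
  induction w with
  | nil => rfl
  | cons a w ih =>
    rw [sigmaL_cons, List.count_append, ih, List.count_cons]
    rcases a with _ | _ | a <;> simp [sigmaW] <;> omega

lemma count2_sigmaL (w : List ℕ) : (sigmaL w).count 2 = w.count 1 := by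
  induction w with
  | nil => rfl
  | cons a w ih =>
    rw [sigmaL_cons, List.count_append, ih, List.count_cons]
    rcases a with _ | _ | a <;> simp [sigmaW] <;> omega

lemma length_sigmaL (w : List ℕ) :
    (sigmaL w).length = w.length + w.count 0 + w.count 1 := by
  induction w with
  | nil => rfl
  | cons a w ih =>
    rw [sigmaL_cons, List.length_append, ih, List.count_cons, List.count_cons]
    rcases a with _ | _ | a <;> simp [sigmaW] <;> omega

lemma length_pref (n : ℕ) : n + 1 ≤ (pref n).length := by
  induction n with
  | zero => simp [pref]
  | succ n ih =>
    rw [pref_succ, length_sigmaL]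
    have h0 : 1 ≤ (pref n).count 0 := List.one_le_count_iff.2 (zero_mem_pref n)
    omega

lemma getD_of_prefix {a b : List ℕ} (h : a <+: b) {k : ℕ} (hk : k < a.length) :
    b.getD k 0 = a.getD k 0 := by
  obtain ⟨c, rfl⟩ := h
  rw [List.getD_eq_getElem?_getD, List.getD_eq_getElem?_getD,
    List.getElem?_append_left hk]

lemma t_eq_pref {N k : ℕ} (hk : k < (pref N).length) : (pref N).getD k 0 = t k := by
  have ht : t k = (pref (k + 1)).getD k 0 := rfl
  rcases Nat.le_total N (k + 1) with h | h
  · rw [ht, getD_of_prefix (pref_prefix h) hk]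
  · have hk' : k < (pref (k + 1)).length := by have := length_pref (k+1); omega
    rw [ht, getD_of_prefix (pref_prefix h) hk']

def tw (m : ℕ) : List ℕ := (List.range m).map t

lemma length_tw (m : ℕ) : (tw m).length = m := by simp [tw]

lemma getD_tw {m k : ℕ} (hk : k < m) : (tw m).getD k 0 = t k := by
  rw [List.getD_eq_getElem?_getD]
  simp [tw, List.getElem?_map, List.getElem?_range hk]

lemma tw_eq_take {m N : ℕ} (h : m ≤ (pref N).length) : tw m = (pref N).take m := by
  apply List.ext_getElem
  · simp [length_tw, h]
  · intro i h1 h2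
    rw [length_tw] at h1
    have : (pref N).take m = (pref N).take m := rfl
    rw [List.getElem_take]
    have hi : i < (pref N).length := lt_of_lt_of_le h1 h
    have := t_eq_pref (N := N) hi
    simp only [tw, List.getElem_map, List.getElem_range]
    rw [← this, List.getD_eq_getElem?_getD, List.getElem?_eq_getElem hi]
    rfl

lemma tw_of_prefix {l : List ℕ} {N : ℕ} (h : l <+: pref N) : l = tw l.length := by
  have h2 := List.prefix_iff_eq_take.mp h
  rw [tw_eq_take h.length_le]; exact h2

lemma pref_eq_tw (N : ℕ) : pref N = tw (pref N).length :=
  tw_of_prefix (List.prefix_refl _)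

open Nat in
lemma count_eq_listcount (x m : ℕ) :
    Nat.count (fun k => t k = x) m = (tw m).count x := by
  rw [Nat.count, tw, List.count, List.countP_map]
  congr 1

def S (m : ℕ) : ℕ :=
  m + Nat.count (fun k => t k = 0) m + Nat.count (fun k => t k = 1) m

lemma tw_S (m : ℕ) : tw (S m) = sigmaL (tw m) := by
  have h1 : tw m <+: pref m := by
    rw [tw_eq_take (le_of_lt (lt_of_lt_of_le (Nat.lt_succ_self m) (length_pref m)))]
    exact List.take_prefix _ _
  have h2 : sigmaL (tw m) <+: pref (m + 1) := by
    rw [pref_succ]; exact sigmaL_prefix h1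
  have h3 : sigmaL (tw m) = tw (sigmaL (tw m)).length := tw_of_prefix h2
  have h4 : (sigmaL (tw m)).length = S m := by
    rw [length_sigmaL, length_tw, S, count_eq_listcount, count_eq_listcount]
  rw [← h4]; exact h3.symm

lemma tw_succ (m : ℕ) : tw (m + 1) = tw m ++ [t m] := by
  simp [tw, List.range_succ]

lemma S_succ (m : ℕ) : S (m + 1) =
    S m + 1 + (if t m = 0 then 1 else 0) + (if t m = 1 then 1 else 0) := by
  simp only [S, Nat.count_succ]
  omega

lemma sigmaW_getD_zero (a : ℕ) : (sigmaW a).getD 0 0 = 0 := by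
  rcases a with _ | _ | a <;> rfl

lemma t_S (m : ℕ) : t (S m) = 0 := by
  have hlt : S m < S (m + 1) := by rw [S_succ]; omega
  have := getD_tw (m := S (m + 1)) (k := S m) hlt
  rw [tw_S (m+1), tw_succ m, sigmaL_append] at this
  have hlen : (sigmaL (tw m)).length = S m := by
    have := (tw_S m) ▸ length_tw (S m); omega
  rw [← this, List.getD_eq_getElem?_getD, List.getElem?_append_right (by omega), hlen,
    Nat.sub_self]
  have : sigmaL [t m] = sigmaW (t m) ++ [] := by simp [sigmaL]
  rw [this, List.getElem?_append_left (by
    rcases h : t m with _ | _ | a <;> simp [sigmaW])]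
  have := sigmaW_getD_zero (t m)
  rw [List.getD_eq_getElem?_getD] at this
  exact this

lemma t_S_add_one {m x y : ℕ} (hx : t m = x) (hxy : sigmaW x = [0, y]) :
    t (S m + 1) = y := by
  have hlt : S m + 1 < S (m + 1) := by
    rw [S_succ]
    rcases Nat.eq_zero_or_pos x with h | h
    · subst h; simp [hx]
    · have : x = 1 := by
        by_contra hne
        have : sigmaW x = [0] := by
          rcases x with _ | _ | a; omega; omega; rfl
        rw [this] at hxy; simp at hxy
      subst this; simp [hx]
  have := getD_tw (m := S (m + 1)) (k := S m + 1) hlt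
  rw [tw_S (m+1), tw_succ m, sigmaL_append] at this
  have hlen : (sigmaL (tw m)).length = S m := by
    have := (tw_S m) ▸ length_tw (S m); omega
  rw [← this, List.getD_eq_getElem?_getD, List.getElem?_append_right (by omega), hlen]
  have h1 : S m + 1 - S m = 1 := by omega
  rw [h1]
  have : sigmaL [t m] = [0, y] := by simp [sigmaL, hx, hxy]
  rw [this]
  rfl

lemma count0_S (m : ℕ) : Nat.count (fun k => t k = 0) (S m) = m := by
  rw [count_eq_listcount, tw_S, count0_sigmaL, length_tw]

lemma count1_S (m : ℕ) :
    Nat.count (fun k => t k = 1) (S m) = Nat.count (fun k => t k = 0) m := by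
  rw [count_eq_listcount, tw_S, count1_sigmaL, count_eq_listcount]

lemma count2_S (m : ℕ) :
    Nat.count (fun k => t k = 2) (S m) = Nat.count (fun k => t k = 1) m := by
  rw [count_eq_listcount, tw_S, count2_sigmaL, count_eq_listcount]

lemma S_strictMono : StrictMono S := by
  apply strictMono_nat_of_lt_succ
  intro n
  rw [S_succ]; omega

lemma inf0 : {k | t k = 0}.Infinite := by
  apply Set.infinite_of_injective_forall_mem (f := S) S_strictMono.injective
  intro a; exact t_S a

lemma inf1 : {k | t k = 1}.Infinite := by
  apply Set.infinite_of_injective_forall_mem (f := fun k => S (S k) + 1)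
  · intro a b h
    simp only at h
    exact S_strictMono.injective (S_strictMono.injective (by omega))
  · intro a
    exact t_S_add_one (t_S a) rfl

lemma inf2 : {k | t k = 2}.Infinite := by
  apply Set.infinite_of_injective_forall_mem (f := fun k => S (S (S k) + 1) + 1)
  · intro a b h
    simp only at h
    have := S_strictMono.injective (show S (S (S a) + 1) = S (S (S b) + 1) by omega)
    exact S_strictMono.injective (S_strictMono.injective (by omega))
  · intro a
    exact t_S_add_one (t_S_add_one (t_S a) rfl) rfl

lemma B_eq (n : ℕ) : B n = S n := by
  have h := Nat.nth_count (p := fun k => t k = 0) (n := S n) (t_S n)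
  rw [count0_S] at h
  rw [B]; exact h

lemma A_eq (n : ℕ) : A n = S (B n) + 1 := by
  have ht0 : t (B n) = 0 := Nat.nth_mem_of_infinite inf0 n
  have ht1 : t (S (B n) + 1) = 1 := t_S_add_one ht0 rfl
  have h := Nat.nth_count (p := fun k => t k = 1) ht1
  have hc : Nat.count (fun k => t k = 0) (B n) = n := Nat.count_nth_of_infinite inf0 n
  rw [Nat.count_succ, count1_S, if_neg (by rw [t_S]; omega), hc] at h
  simpa [A] using h

lemma C_eq (n : ℕ) : C n = S (A n) + 1 := by
  have ht1 : t (A n) = 1 := Nat.nth_mem_of_infinite inf1 n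
  have ht2 : t (S (A n) + 1) = 2 := t_S_add_one ht1 rfl
  have h := Nat.nth_count (p := fun k => t k = 2) ht2
  have hc : Nat.count (fun k => t k = 1) (A n) = n := Nat.count_nth_of_infinite inf1 n
  rw [Nat.count_succ, count2_S, if_neg (by rw [t_S]; omega), hc] at h
  simpa [C] using h

end Trib

/-- C(n) = A(n) + B(n) + n + 2 for all n ≥ 0. -/
theorem C_eq_A_add_B (n : ℕ) : C n = A n + B n + n + 2 := by
  open Trib in
  have hC := C_eq n
  have hA := A_eq n
  have h1 : Nat.count (fun k => t k = 1) (A n) = n := Nat.count_nth_of_infinite inf1 n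
  have h0 : Nat.count (fun k => t k = 0) (A n) = B n + 1 := by
    rw [hA, Nat.count_succ, count0_S, if_pos (t_S (B n))]
  rw [hC, S, h0, h1]
  omega
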